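/- Let g have finitely many physical measures μ_1,…,μ_k such that G(g) is the simplex generated by them, each μ_i assigns positive measure to some ball B_i contained (mod Lebesgue-null sets) in the basin of μ_i, and for Lebesgue-a.e. x every weak-* limit of the empirical measures (1/n)Σ δ_{g^i(x)} lies in G(g). Then the union of the basins of μ_1,…,μ_k has full volume in M. -/

import Mathlib

open MeasureTheory Filter
open scoped ENNReal

set_option linter.unusedSectionVars false
set_option maxHeartbeats 1000000

open Set TopologicalSpace
open scoped NNReal

/-- The basin of an invariant measure `μ` for `g`: the set of points whose empirical
measures `(1/n) ∑_{i<n} δ_{gⁱx}` converge to `μ` in the weak-* topology (tested against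
continuous functions; `M` is compact). -/
def basin {M : Type*} [TopologicalSpace M] [MeasurableSpace M]
    (g : M → M) (μ : Measure M) : Set M :=
  {x | ∀ φ : C(M, ℝ),
    Tendsto (fun n : ℕ => (∑ i ∈ Finset.range n, φ (g^[i] x)) / n)
      atTop (nhds (∫ y, φ y ∂μ))}

section RMK
variable {X : Type*} [MetricSpace X] [CompactSpace X]
variable (L : C(X, ℝ) → ℝ)
variable (hadd : ∀ f h : C(X,ℝ), L (f + h) = L f + L h)
variable (hsmul : ∀ (c : ℝ) (f : C(X,ℝ)), L (c • f) = c * L f)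
variable (hpos : ∀ f : C(X,ℝ), (∀ x, 0 ≤ f x) → 0 ≤ L f)

/-- admissible functions for a compact set -/
def rmkA (K : Set X) : Set C(X,ℝ) := {f | (∀ x, 0 ≤ f x) ∧ ∀ x ∈ K, 1 ≤ f x}

theorem rmkA_one (K : Set X) : (1 : C(X,ℝ)) ∈ rmkA K := ⟨fun _ => zero_le_one, fun _ _ => le_refl 1⟩

/-- the content value as a real number -/
noncomputable def rmkl (K : Set X) : ℝ := sInf (L '' rmkA K)

include hpos in
theorem rmkl_nonneg (K : Set X) : 0 ≤ rmkl L K := by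
  apply Real.sInf_nonneg
  rintro x ⟨f, hf, rfl⟩
  exact hpos f hf.1

include hpos in
theorem rmk_bddBelow (K : Set X) : BddBelow (L '' rmkA K) := by
  refine ⟨0, ?_⟩
  rintro x ⟨f, hf, rfl⟩
  exact hpos f hf.1

include hpos in
theorem rmkl_le {K : Set X} {f : C(X,ℝ)} (hf : f ∈ rmkA K) : rmkl L K ≤ L f :=
  csInf_le (rmk_bddBelow L hpos K) ⟨f, hf, rfl⟩

include hadd hsmul hpos in
theorem rmk_mono {f h : C(X,ℝ)} (hfh : ∀ x, f x ≤ h x) : L f ≤ L h := by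
  have h0 : 0 ≤ L (h - f) := hpos _ (fun x => by simpa using sub_nonneg.2 (hfh x))
  have : L (h - f + f) = L (h - f) + L f := hadd _ _
  simp only [sub_add_cancel] at this
  linarith

include hpos in
theorem rmkl_mono {K₁ K₂ : Set X} (h : K₁ ⊆ K₂) : rmkl L K₁ ≤ rmkl L K₂ := by
  apply le_csInf
  · exact ⟨L 1, 1, rmkA_one _, rfl⟩
  rintro x ⟨f, hf, rfl⟩
  exact rmkl_le L hpos ⟨hf.1, fun y hy => hf.2 y (h hy)⟩

theorem rmk_nonempty (K : Set X) : (L '' rmkA K).Nonempty := ⟨L 1, 1, rmkA_one _, rfl⟩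

include hadd hpos in
theorem rmkl_union_le' (K₁ K₂ : Set X) : rmkl L (K₁ ∪ K₂) ≤ rmkl L K₁ + rmkl L K₂ := by
  have step : ∀ f₁ ∈ rmkA (X := X) K₁, ∀ f₂ ∈ rmkA (X := X) K₂,
      rmkl L (K₁ ∪ K₂) ≤ L f₁ + L f₂ := by
    intro f₁ h₁ f₂ h₂
    have : f₁ + f₂ ∈ rmkA (K₁ ∪ K₂) := by
      constructor
      · intro x; simpa using add_nonneg (h₁.1 x) (h₂.1 x)
      · rintro x (hx | hx)
        · have := h₁.2 x hx; have := h₂.1 x; simp only [ContinuousMap.add_apply]; linarith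
        · have := h₂.2 x hx; have := h₁.1 x; simp only [ContinuousMap.add_apply]; linarith
    calc rmkl L (K₁ ∪ K₂) ≤ L (f₁ + f₂) := rmkl_le L hpos this
    _ = L f₁ + L f₂ := hadd _ _
  have h1 : ∀ f₁ ∈ rmkA (X := X) K₁, rmkl L (K₁ ∪ K₂) - rmkl L K₂ ≤ L f₁ := by
    intro f₁ h₁
    have : rmkl L (K₁ ∪ K₂) - L f₁ ≤ rmkl L K₂ := by
      apply le_csInf (rmk_nonempty L _)
      rintro x ⟨f₂, h₂, rfl⟩
      linarith [step f₁ h₁ f₂ h₂]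
    linarith
  have : rmkl L (K₁ ∪ K₂) - rmkl L K₂ ≤ rmkl L K₁ := by
    apply le_csInf (rmk_nonempty L _)
    rintro x ⟨f₁, h₁, rfl⟩
    exact h1 f₁ h₁
  linarith

include hadd hsmul hpos in
theorem rmkl_union_disjoint (K₁ K₂ : Set X) (h₁ : IsClosed K₁) (h₂ : IsClosed K₂)
    (hd : Disjoint K₁ K₂) :
    rmkl L (K₁ ∪ K₂) = rmkl L K₁ + rmkl L K₂ := by
  refine le_antisymm (rmkl_union_le' L hadd hpos K₁ K₂) ?_
  obtain ⟨e, he₂, he₁, he01⟩ := exists_continuous_zero_one_of_isClosed h₂ h₁ hd.symm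
  -- e = 0 on K₂, e = 1 on K₁, 0 ≤ e ≤ 1
  apply le_csInf (rmk_nonempty L _)
  rintro x ⟨f, hf, rfl⟩
  have hfe₁ : f * e ∈ rmkA K₁ := by
    constructor
    · intro x; exact mul_nonneg (hf.1 x) (he01 x).1
    · intro x hx
      have : e x = 1 := he₁ hx
      simp only [ContinuousMap.mul_apply, this, mul_one]
      exact hf.2 x (Or.inl hx)
  have hfe₂ : f * (1 - e) ∈ rmkA K₂ := by
    constructor
    · intro x
      simp only [ContinuousMap.sub_apply, ContinuousMap.one_apply, ContinuousMap.mul_apply]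
      exact mul_nonneg (hf.1 x) (by linarith [(he01 x).2])
    · intro x hx
      have : e x = 0 := he₂ hx
      simp only [ContinuousMap.mul_apply, ContinuousMap.sub_apply, ContinuousMap.one_apply, this]
      simpa using hf.2 x (Or.inr hx)
  have hsplit : f * e + f * (1 - e) = f := by ext x; simp; ring
  calc rmkl L K₁ + rmkl L K₂ ≤ L (f * e) + L (f * (1 - e)) :=
        add_le_add (rmkl_le L hpos hfe₁) (rmkl_le L hpos hfe₂)
    _ = L (f * e + f * (1 - e)) := (hadd _ _).symm
    _ = L f := by rw [hsplit]

/-- The Riesz content associated to `L`. -/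
noncomputable def rmkContent (hadd : ∀ f h : C(X,ℝ), L (f + h) = L f + L h)
    (hsmul : ∀ (c : ℝ) (f : C(X,ℝ)), L (c • f) = c * L f)
    (hpos : ∀ f : C(X,ℝ), (∀ x, 0 ≤ f x) → 0 ≤ L f) : Content X where
  toFun K := (rmkl L K).toNNReal
  mono' K₁ K₂ h := Real.toNNReal_mono (rmkl_mono L hpos h)
  sup_disjoint' K₁ K₂ hd hc₁ hc₂ := by
    simp only [Compacts.coe_sup]
    rw [← Real.toNNReal_add (rmkl_nonneg L hpos _) (rmkl_nonneg L hpos _),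
      rmkl_union_disjoint L hadd hsmul hpos K₁ K₂ hc₁ hc₂ hd]
  sup_le' K₁ K₂ := by
    rw [← Real.toNNReal_add (rmkl_nonneg L hpos _) (rmkl_nonneg L hpos _)]
    exact Real.toNNReal_mono (rmkl_union_le' L hadd hpos K₁ K₂)

section Meas
variable [MeasurableSpace X] [BorelSpace X]

/-- The measure associated to the functional `L`. -/
noncomputable def rmkMeasure (hadd : ∀ f h : C(X,ℝ), L (f + h) = L f + L h)
    (hsmul : ∀ (c : ℝ) (f : C(X,ℝ)), L (c • f) = c * L f)
    (hpos : ∀ f : C(X,ℝ), (∀ x, 0 ≤ f x) → 0 ≤ L f) : Measure X :=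
  (rmkContent L hadd hsmul hpos).measure

include hadd hsmul hpos

theorem rmkl_le_one (hone : L 1 = 1) (K : Set X) : rmkl L K ≤ 1 := by
  simpa [hone] using rmkl_le L hpos (rmkA_one K)

theorem rmkMeasure_univ_le (hone : L 1 = 1) :
    rmkMeasure L hadd hsmul hpos univ ≤ 1 := by
  rw [rmkMeasure, Content.measure_apply _ MeasurableSet.univ,
    Content.outerMeasure_of_isOpen _ _ isOpen_univ]
  apply iSup_le; intro K
  apply iSup_le; intro _
  show ((rmkContent L hadd hsmul hpos).toFun K : ℝ≥0∞) ≤ 1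
  rw [show (1 : ℝ≥0∞) = ((1 : ℝ≥0) : ℝ≥0∞) by simp, ENNReal.coe_le_coe,
    show (1 : ℝ≥0) = Real.toNNReal 1 by simp]
  exact Real.toNNReal_mono (rmkl_le_one L hadd hsmul hpos hone K)

theorem rmkMeasure_lt_top (hone : L 1 = 1) (s : Set X) :
    rmkMeasure L hadd hsmul hpos s < ∞ :=
  lt_of_le_of_lt (le_trans (measure_mono (subset_univ s))
    (rmkMeasure_univ_le L hadd hsmul hpos hone)) ENNReal.one_lt_top

/-- bump estimate: `L h ≤ ν U` for `0 ≤ h ≤ 1` supported in the open set `U`. -/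
theorem rmk_bump_le (hone : L 1 = 1) {h : C(X,ℝ)} {U : Set X} (hU : IsOpen U)
    (h0 : ∀ x, 0 ≤ h x) (h1 : ∀ x, h x ≤ 1) (hsupp : tsupport h ⊆ U) :
    L h ≤ (rmkMeasure L hadd hsmul hpos U).toReal := by
  have hKc : IsCompact (tsupport h) := (isClosed_tsupport h).isCompact
  have step1 : L h ≤ rmkl L (tsupport h) := by
    apply le_csInf (rmk_nonempty L _)
    rintro x ⟨f, hf, rfl⟩
    apply rmk_mono L hadd hsmul hpos
    intro x
    by_cases hx : x ∈ tsupport h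
    · exact le_trans (h1 x) (hf.2 x hx)
    · rw [image_eq_zero_of_notMem_tsupport hx]; exact hf.1 x
  have step2 : ((rmkContent L hadd hsmul hpos).toFun ⟨tsupport h, hKc⟩ : ℝ≥0∞)
      ≤ rmkMeasure L hadd hsmul hpos U := by
    rw [rmkMeasure, Content.measure_apply _ hU.measurableSet,
      Content.outerMeasure_of_isOpen _ _ hU]
    exact Content.le_innerContent _ _ ⟨U, hU⟩ hsupp
  have step3 : rmkl L (tsupport h)
      ≤ (rmkMeasure L hadd hsmul hpos U).toReal := by
    have := ENNReal.toReal_mono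
      (ne_of_lt (rmkMeasure_lt_top L hadd hsmul hpos hone U)) step2
    rw [show (rmkContent L hadd hsmul hpos).toFun ⟨tsupport h, hKc⟩
      = (rmkl L (tsupport h)).toNNReal from rfl] at this
    rw [ENNReal.coe_toReal] at this
    rwa [Real.coe_toNNReal _ (rmkl_nonneg L hpos _)] at this
  exact le_trans step1 step3

/-- outer regularity of the content measure. -/
theorem rmk_outer_regular (hone : L 1 = 1) {s : Set X} (hs : MeasurableSet s)
    {ε : ℝ} (hε : 0 < ε) :
    ∃ U : Set X, IsOpen U ∧ s ⊆ U ∧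
      rmkMeasure L hadd hsmul hpos U
        ≤ rmkMeasure L hadd hsmul hpos s + ENNReal.ofReal ε := by
  set ν := rmkMeasure L hadd hsmul hpos with hν
  have hlt : ν s < ν s + ENNReal.ofReal ε := by
    apply ENNReal.lt_add_right (ne_of_lt (rmkMeasure_lt_top L hadd hsmul hpos hone s))
    simpa using hε
  have heq : ν s = ⨅ (U : Set X) (hU : IsOpen U) (_ : s ⊆ U),
      (rmkContent L hadd hsmul hpos).innerContent ⟨U, hU⟩ := by
    rw [hν, rmkMeasure, Content.measure_apply _ hs, Content.outerMeasure_eq_iInf]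
  nth_rewrite 1 [heq] at hlt
  obtain ⟨U, hU⟩ := iInf_lt_iff.1 hlt
  obtain ⟨hUo, hU⟩ := iInf_lt_iff.1 hU
  obtain ⟨hsU, hU⟩ := iInf_lt_iff.1 hU
  refine ⟨U, hUo, hsU, ?_⟩
  have : ν U = (rmkContent L hadd hsmul hpos).innerContent ⟨U, hUo⟩ := by
    rw [hν, rmkMeasure, Content.measure_apply _ hUo.measurableSet,
      Content.outerMeasure_of_isOpen _ _ hUo]
  rw [this]
  exact le_of_lt hU


include hadd hsmul in
theorem rmk_zero : L 0 = 0 := by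
  have := hsmul 0 0
  simpa using this

include hadd hsmul in
theorem rmk_sum {ι : Type*} (s : Finset ι) (f : ι → C(X,ℝ)) :
    L (∑ i ∈ s, f i) = ∑ i ∈ s, L (f i) := by
  classical
  induction s using Finset.induction with
  | empty => simpa using rmk_zero L hadd hsmul hpos
  | @insert _ _ h ih => rw [Finset.sum_insert h, hadd, ih, Finset.sum_insert h]

theorem rmk_L_le_integral_nonneg (hone : L 1 = 1) (φ : C(X,ℝ)) (hφ : ∀ x, 0 ≤ φ x) :
    L φ ≤ ∫ x, φ x ∂(rmkMeasure L hadd hsmul hpos) := by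
  set ν := rmkMeasure L hadd hsmul hpos with hνdef
  haveI hfin : IsFiniteMeasure ν := ⟨lt_of_le_of_lt
    (rmkMeasure_univ_le L hadd hsmul hpos hone) ENNReal.one_lt_top⟩
  have hInt : Integrable (fun x => φ x) ν :=
    φ.continuous.integrable_of_hasCompactSupport ((isClosed_tsupport _).isCompact)
  set R := ‖φ‖ with hRdef
  have hR0 : (0:ℝ) ≤ R := norm_nonneg _
  have hφR : ∀ x, φ x ≤ R := fun x => le_trans (le_abs_self _)
    (by rw [← Real.norm_eq_abs]; exact φ.norm_coe_le_norm x)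
  have key : ∀ ε : ℝ, 0 < ε → ε ≤ 1 → L φ ≤ (∫ x, φ x ∂ν) + ε * (R + 4) := by
    intro ε hε hε1
    obtain ⟨n', hn'⟩ := exists_nat_ge ((R + ε)/ε)
    set n := max n' 1 with hn
    have hn1 : 1 ≤ n := le_max_right _ _
    have hnpos : (0:ℝ) < (n:ℝ) := by exact_mod_cast Nat.lt_of_lt_of_le Nat.zero_lt_one hn1
    set δ := (R + ε)/(n:ℝ) with hδdef
    have hδpos : 0 < δ := div_pos (by linarith) hnpos
    have hnδ : (n:ℝ) * δ = R + ε := by rw [hδdef]; field_simp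
    have hδε : δ ≤ ε := by
      rw [hδdef, div_le_iff₀ hnpos]
      have h1 : (R+ε)/ε ≤ (n':ℝ) := hn'
      have h2 : (n':ℝ) ≤ (n:ℝ) := by exact_mod_cast le_max_left n' 1
      calc R + ε = ((R+ε)/ε) * ε := by field_simp
        _ ≤ (n:ℝ) * ε := mul_le_mul_of_nonneg_right (le_trans h1 h2) hε.le
        _ = ε * (n:ℝ) := mul_comm _ _
    set y : Fin n → ℝ := fun i => -ε + (((i:ℕ):ℝ)+1) * δ with hydef
    set E : Fin n → Set X := fun i =>
      φ ⁻¹' (Set.Ioc (-ε + ((i:ℕ):ℝ)*δ) (-ε + (((i:ℕ):ℝ)+1)*δ)) with hEdef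
    have hEmeas : ∀ i, MeasurableSet (E i) :=
      fun i => (φ.continuous.measurable) measurableSet_Ioc
    have hEdisj : Pairwise (Function.onFun Disjoint E) := by
      intro i j hij
      refine Disjoint.preimage _ (Set.Ioc_disjoint_Ioc.2 ?_)
      have hijn : (i:ℕ) ≠ (j:ℕ) := fun h => hij (Fin.ext h)
      rcases Nat.lt_or_ge (i:ℕ) (j:ℕ) with h | h
      · have h1 : ((i:ℕ):ℝ) + 1 ≤ ((j:ℕ):ℝ) := by exact_mod_cast h
        refine le_trans inf_le_left (le_trans ?_ le_sup_right)
        nlinarith [hδpos.le]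
      · have h2 : (j:ℕ) < (i:ℕ) := lt_of_le_of_ne h (fun hh => hijn hh.symm)
        have h1 : ((j:ℕ):ℝ) + 1 ≤ ((i:ℕ):ℝ) := by exact_mod_cast h2
        refine le_trans inf_le_right (le_trans ?_ le_sup_left)
        nlinarith [hδpos.le]
    have hEcover : (⋃ i, E i) = Set.univ := by
      ext x
      simp only [Set.mem_iUnion, Set.mem_univ, iff_true]
      have h1 : -ε < φ x := lt_of_lt_of_le (by linarith) (hφ x)
      have h2 : φ x ≤ -ε + (n:ℝ) * δ := by rw [hnδ]; have := hφR x; linarith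
      set t := (φ x + ε)/δ with htdef
      have htδ : t * δ = φ x + ε := by rw [htdef]; field_simp
      have ht0 : 0 < t := div_pos (by linarith) hδpos
      have htn : t ≤ (n:ℝ) := by rw [htdef, div_le_iff₀ hδpos]; nlinarith
      set m := ⌈t⌉₊ with hmdef
      have hm1 : 1 ≤ m := Nat.ceil_pos.2 ht0
      have hmn : m ≤ n := Nat.ceil_le.2 htn
      refine ⟨⟨m - 1, by omega⟩, ?_⟩
      have hcast : (((m - 1 : ℕ)) : ℝ) = (m:ℝ) - 1 := by
        push_cast [Nat.cast_sub hm1]; ring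
      simp only [hEdef, Set.mem_preimage, Set.mem_Ioc, Fin.val_mk]
      rw [hcast]
      constructor
      · have hlt : (m:ℝ) - 1 < t := by
          have := Nat.ceil_lt_add_one ht0.le
          rw [← hmdef] at this
          linarith
        nlinarith
      · have hle : t ≤ (m:ℝ) := Nat.le_ceil t
        have : ((m:ℝ) - 1) + 1 = (m:ℝ) := by ring
        rw [this]
        nlinarith
    have hνE_ne : ∀ i, ν (E i) ≠ ∞ :=
      fun i => ne_of_lt (rmkMeasure_lt_top L hadd hsmul hpos hone _)
    set m' : Fin n → ℝ := fun i => (ν (E i)).toReal with hm'def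
    have hm'0 : ∀ i, 0 ≤ m' i := fun i => ENNReal.toReal_nonneg
    have huniv : ν Set.univ = ∑ i, ν (E i) := by
      rw [← hEcover, measure_iUnion hEdisj hEmeas, tsum_fintype]
    have hTsum : ∑ i, m' i ≤ 1 := by
      have h1 : ∑ i, m' i = (ν Set.univ).toReal := by
        rw [huniv, ENNReal.toReal_sum (fun i _ => hνE_ne i)]
      rw [h1]
      have := ENNReal.toReal_mono ENNReal.one_ne_top
        (rmkMeasure_univ_le L hadd hsmul hpos hone)
      simpa using this
    have hreg : ∀ i, ∃ U : Set X, IsOpen U ∧ E i ⊆ U ∧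
        ν U ≤ ν (E i) + ENNReal.ofReal (ε/(n:ℝ)) :=
      fun i => rmk_outer_regular L hadd hsmul hpos hone (hEmeas i) (div_pos hε hnpos)
    choose V hVo hVs hVle using hreg
    set U : Fin n → Set X := fun i => V i ∩ φ ⁻¹' (Set.Iio (y i + ε)) with hUdef
    have hUo : ∀ i, IsOpen (U i) :=
      fun i => (hVo i).inter (IsOpen.preimage φ.continuous isOpen_Iio)
    have hEU : ∀ i, E i ⊆ U i := by
      intro i x hx
      refine ⟨hVs i hx, ?_⟩
      have hx2 := hx.2
      simp only [Set.mem_preimage, Set.mem_Iio, hydef]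
      linarith
    have hUcover : Set.univ ⊆ ⋃ i, U i := by
      rw [← hEcover]; exact Set.iUnion_mono hEU
    obtain ⟨H, hHsub⟩ := PartitionOfUnity.exists_isSubordinate isClosed_univ U hUo hUcover
    have hHsum : (∑ i, (H i : C(X,ℝ))) = 1 := by
      ext x
      rw [show ((∑ i, (H i : C(X,ℝ))) x) = ∑ i, (H i) x by
        simp [ContinuousMap.coe_sum, Finset.sum_apply]]
      rw [← finsum_eq_sum_of_fintype (fun i => (H i) x)]
      simpa using H.sum_eq_one (Set.mem_univ x)
    have hφdecomp : φ = ∑ i, (H i : C(X,ℝ)) * φ := by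
      rw [← Finset.sum_mul, hHsum, one_mul]
    have hLφ : L φ = ∑ i, L ((H i : C(X,ℝ)) * φ) := by
      conv_lhs => rw [hφdecomp]
      exact rmk_sum L hadd hsmul hpos _ _
    have hbound1 : ∀ i, L ((H i : C(X,ℝ)) * φ) ≤ (y i + ε) * L (H i) := by
      intro i
      have hmono : ∀ x, ((H i : C(X,ℝ)) * φ) x ≤ ((y i + ε) • (H i : C(X,ℝ))) x := by
        intro x
        simp only [ContinuousMap.mul_apply, ContinuousMap.smul_apply, smul_eq_mul]
        by_cases hx : x ∈ tsupport (H i)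
        · have hUx : x ∈ U i := hHsub i hx
          have hφx : φ x < y i + ε := hUx.2
          have h0 : 0 ≤ (H i) x := H.nonneg i x
          nlinarith
        · rw [image_eq_zero_of_notMem_tsupport hx]; simp
      calc L ((H i : C(X,ℝ)) * φ) ≤ L ((y i + ε) • (H i : C(X,ℝ))) :=
            rmk_mono L hadd hsmul hpos hmono
        _ = (y i + ε) * L (H i) := hsmul _ _
    have hy0 : ∀ i, 0 ≤ y i + ε := by
      intro i
      have : (0:ℝ) ≤ (((i:ℕ):ℝ)+1) * δ := by positivity
      simp only [hydef]; linarith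
    have hyR : ∀ i, y i + ε ≤ R + 2*ε := by
      intro i
      have h1 : ((i:ℕ):ℝ) + 1 ≤ (n:ℝ) := by exact_mod_cast i.2
      have : (((i:ℕ):ℝ)+1) * δ ≤ (n:ℝ) * δ := mul_le_mul_of_nonneg_right h1 hδpos.le
      simp only [hydef]
      rw [hnδ] at this
      linarith
    have hLH0 : ∀ i, 0 ≤ L (H i) := fun i => hpos _ (H.nonneg i)
    have hLHle : ∀ i, L (H i) ≤ m' i + ε/(n:ℝ) := by
      intro i
      have hb := rmk_bump_le L hadd hsmul hpos hone (hUo i) (H.nonneg i) (H.le_one i) (hHsub i)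
      have h2 : ν (U i) ≤ ν (E i) + ENNReal.ofReal (ε/(n:ℝ)) :=
        le_trans (measure_mono Set.inter_subset_left) (hVle i)
      have h3 : (ν (U i)).toReal ≤ m' i + ε/(n:ℝ) := by
        have h4 := ENNReal.toReal_mono
          (by simp [hνE_ne i, ENNReal.add_ne_top]) h2
        rwa [ENNReal.toReal_add (hνE_ne i) ENNReal.ofReal_ne_top,
          ENNReal.toReal_ofReal (div_pos hε hnpos).le] at h4
      exact le_trans hb h3
    have hIntOn : ∀ i, IntegrableOn (fun x => φ x) (E i) ν := fun i => hInt.integrableOn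
    have hkey5 : ∀ i, (y i - ε) * m' i ≤ ∫ x in E i, φ x ∂ν := by
      intro i
      apply setIntegral_ge_of_const_le_real (hEmeas i) (hνE_ne i) _ (hIntOn i)
      intro x hx
      have hx1 := hx.1
      simp only [hydef]
      have : y i - δ = -ε + ((i:ℕ):ℝ)*δ := by simp only [hydef]; ring
      simp only [hydef] at this ⊢
      linarith
    have hIntSum : ∑ i, ∫ x in E i, φ x ∂ν = ∫ x, φ x ∂ν := by
      rw [← setIntegral_univ (μ := ν) (f := fun x => φ x), ← hEcover,
        integral_iUnion hEmeas hEdisj (by rw [hEcover]; exact hInt.integrableOn),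
        tsum_fintype]
    have hdiv : (n:ℝ) * ((R + 2*ε)*(ε/(n:ℝ))) = (R+2*ε)*ε := by field_simp
    calc L φ = ∑ i, L ((H i : C(X,ℝ)) * φ) := hLφ
      _ ≤ ∑ i, (y i + ε) * L (H i) := Finset.sum_le_sum (fun i _ => hbound1 i)
      _ ≤ ∑ i, ((y i - ε) * m' i + 2*ε*(m' i) + (R + 2*ε)*(ε/(n:ℝ))) := by
          apply Finset.sum_le_sum
          intro i _
          have e1 : (y i + ε) * L (H i) ≤ (y i + ε) * (m' i + ε/(n:ℝ)) :=
            mul_le_mul_of_nonneg_left (hLHle i) (hy0 i)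
          have e3 : (y i + ε)*(ε/(n:ℝ)) ≤ (R+2*ε)*(ε/(n:ℝ)) :=
            mul_le_mul_of_nonneg_right (hyR i) (div_pos hε hnpos).le
          nlinarith
      _ = ∑ i, (y i - ε) * m' i + 2*ε*(∑ i, m' i) + (n:ℝ)*((R + 2*ε)*(ε/(n:ℝ))) := by
          rw [Finset.sum_add_distrib, Finset.sum_add_distrib, Finset.sum_const,
            Finset.card_univ, Fintype.card_fin, ← Finset.mul_sum, nsmul_eq_mul]
      _ ≤ (∫ x, φ x ∂ν) + 2*ε + (R+2*ε)*ε := by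
          have e1 : ∑ i, (y i - ε) * m' i ≤ ∫ x, φ x ∂ν := by
            rw [← hIntSum]; exact Finset.sum_le_sum (fun i _ => hkey5 i)
          have e2 : 2*ε*(∑ i, m' i) ≤ 2*ε := by nlinarith
          rw [hdiv]
          linarith
      _ ≤ (∫ x, φ x ∂ν) + ε * (R + 4) := by nlinarith
  by_contra hcon
  push_neg at hcon
  set d := L φ - ∫ x, φ x ∂ν with hd
  have hd0 : 0 < d := by simp only [hd]; linarith
  have hRp : (0:ℝ) < R + 4 := by linarith
  set ε := min 1 (d/(2*(R+4))) with hε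
  have hεpos : 0 < ε := lt_min one_pos (by positivity)
  have hε1 : ε ≤ 1 := min_le_left _ _
  have := key ε hεpos hε1
  have h2 : ε * (R+4) ≤ d/2 := by
    have : ε ≤ d/(2*(R+4)) := min_le_right _ _
    calc ε * (R+4) ≤ (d/(2*(R+4))) * (R+4) := mul_le_mul_of_nonneg_right this hRp.le
      _ = d/2 := by field_simp
  simp only [hd] at h2 hd0
  linarith

theorem rmk_L_le_integral (hone : L 1 = 1) (φ : C(X,ℝ)) :
    L φ ≤ ∫ x, φ x ∂(rmkMeasure L hadd hsmul hpos) := by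
  set ν := rmkMeasure L hadd hsmul hpos with hνdef
  haveI hfin : IsFiniteMeasure ν := ⟨lt_of_le_of_lt
    (rmkMeasure_univ_le L hadd hsmul hpos hone) ENNReal.one_lt_top⟩
  have hInt : Integrable (fun x => φ x) ν :=
    φ.continuous.integrable_of_hasCompactSupport ((isClosed_tsupport _).isCompact)
  set c := ‖φ‖ with hc
  have hc0 : 0 ≤ c := norm_nonneg _
  have h1 : ∀ x, 0 ≤ (φ + c • (1:C(X,ℝ))) x := by
    intro x
    have h := φ.norm_coe_le_norm x
    rw [Real.norm_eq_abs] at h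
    have h' := (abs_le.1 h).1
    simp only [ContinuousMap.add_apply, ContinuousMap.smul_apply, ContinuousMap.one_apply,
      smul_eq_mul, mul_one]
    linarith
  have h2 := rmk_L_le_integral_nonneg L hadd hsmul hpos hone (φ + c • 1) h1
  have h3 : L (φ + c • 1) = L φ + c := by rw [hadd, hsmul, hone, mul_one]
  have h4 : ∫ x, (φ + c • (1:C(X,ℝ))) x ∂ν = (∫ x, φ x ∂ν) + c * (ν Set.univ).toReal := by
    simp only [ContinuousMap.add_apply, ContinuousMap.smul_apply, ContinuousMap.one_apply,
      smul_eq_mul, mul_one]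
    rw [integral_add hInt (integrable_const c), integral_const, smul_eq_mul, mul_comm]
    rfl
  have h5 : (ν Set.univ).toReal ≤ 1 := by
    have := ENNReal.toReal_mono ENNReal.one_ne_top
      (rmkMeasure_univ_le L hadd hsmul hpos hone)
    simpa using this
  have h6 : c * (ν Set.univ).toReal ≤ c := by nlinarith [ENNReal.toReal_nonneg (a := ν Set.univ)]
  rw [h3] at h2
  rw [h4] at h2
  linarith

theorem rmk_integral_eq (hone : L 1 = 1) (φ : C(X,ℝ)) :
    ∫ x, φ x ∂(rmkMeasure L hadd hsmul hpos) = L φ := by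
  have h1 := rmk_L_le_integral L hadd hsmul hpos hone φ
  have h2 := rmk_L_le_integral L hadd hsmul hpos hone (-φ)
  have h3 : L (-φ) = - L φ := by
    have := hsmul (-1) φ
    simpa using this
  have h4 : ∫ x, (-φ) x ∂(rmkMeasure L hadd hsmul hpos)
      = - ∫ x, φ x ∂(rmkMeasure L hadd hsmul hpos) := by
    simp only [ContinuousMap.neg_apply]
    exact integral_neg _
  rw [h3, h4] at h2
  linarith

theorem rmk_isProbability (hone : L 1 = 1) :
    IsProbabilityMeasure (rmkMeasure L hadd hsmul hpos) := by
  constructor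
  have h1 := rmk_integral_eq L hadd hsmul hpos hone 1
  rw [hone] at h1
  simp only [ContinuousMap.one_apply, integral_const, smul_eq_mul, mul_one] at h1
  have hne : rmkMeasure L hadd hsmul hpos Set.univ ≠ ∞ :=
    ne_of_lt (rmkMeasure_lt_top L hadd hsmul hpos hone _)
  rw [show (1:ℝ) = (1:ℝ≥0∞).toReal by simp] at h1
  exact (ENNReal.toReal_eq_toReal_iff' hne ENNReal.one_ne_top).1 h1

/-- Riesz-Markov representation: a positive normalized linear functional on `C(X,ℝ)`
for `X` compact metric is represented by a Borel probability measure. -/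
theorem rmk_exists_measure (hone : L 1 = 1) :
    ∃ ν : Measure X, IsProbabilityMeasure ν ∧ ∀ φ : C(X,ℝ), ∫ x, φ x ∂ν = L φ :=
  ⟨rmkMeasure L hadd hsmul hpos, rmk_isProbability L hadd hsmul hpos hone,
    fun φ => rmk_integral_eq L hadd hsmul hpos hone φ⟩

end Meas
end RMK


section Diag
variable {M : Type*} [MetricSpace M] [CompactSpace M]

/-- empirical average -/
noncomputable def eavg (g : M → M) (x : M) (φ : C(M,ℝ)) (n : ℕ) : ℝ :=
  (∑ i ∈ Finset.range n, φ (g^[i] x)) / n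

theorem abs_eavg_le (g : M → M) (x : M) (φ : C(M,ℝ)) (n : ℕ) :
    |eavg g x φ n| ≤ ‖φ‖ := by
  rcases Nat.eq_zero_or_pos n with rfl | hn
  · simp [eavg, norm_nonneg]
  have hb : |∑ i ∈ Finset.range n, φ (g^[i] x)| ≤ n * ‖φ‖ := by
    calc |∑ i ∈ Finset.range n, φ (g^[i] x)| ≤ ∑ i ∈ Finset.range n, |φ (g^[i] x)| :=
          Finset.abs_sum_le_sum_abs _ _
      _ ≤ ∑ _i ∈ Finset.range n, ‖φ‖ := Finset.sum_le_sum (fun i _ => by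
          rw [← Real.norm_eq_abs]; exact φ.norm_coe_le_norm _)
      _ = n * ‖φ‖ := by simp [mul_comm]
  have hnpos : (0:ℝ) < n := by exact_mod_cast hn
  rw [eavg, abs_div, abs_of_pos hnpos, div_le_iff₀ hnpos]
  linarith [hb]

theorem abs_eavg_sub_le (g : M → M) (x : M) (φ ψ : C(M,ℝ)) (n : ℕ) :
    |eavg g x φ n - eavg g x ψ n| ≤ dist φ ψ := by
  rcases Nat.eq_zero_or_pos n with rfl | hn
  · simp [eavg, dist_nonneg]
  have hnpos : (0:ℝ) < n := by exact_mod_cast hn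
  have h1 : eavg g x φ n - eavg g x ψ n
      = (∑ i ∈ Finset.range n, (φ (g^[i] x) - ψ (g^[i] x))) / n := by
    rw [eavg, eavg, div_sub_div_same, Finset.sum_sub_distrib]
  have h2 : |∑ i ∈ Finset.range n, (φ (g^[i] x) - ψ (g^[i] x))| ≤ n * dist φ ψ := by
    calc |∑ i ∈ Finset.range n, (φ (g^[i] x) - ψ (g^[i] x))|
        ≤ ∑ i ∈ Finset.range n, |φ (g^[i] x) - ψ (g^[i] x)| := Finset.abs_sum_le_sum_abs _ _
      _ ≤ ∑ _i ∈ Finset.range n, dist φ ψ := Finset.sum_le_sum (fun i _ => by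
          rw [← Real.dist_eq]; exact ContinuousMap.dist_apply_le_dist _)
      _ = n * dist φ ψ := by simp [mul_comm]
  rw [h1, abs_div, abs_of_pos hnpos, div_le_iff₀ hnpos]
  linarith [h2]

/-- Diagonal argument: a subsequence along which all empirical averages converge,
with a limit functional that is linear, positive, and normalized. -/
theorem exists_limit_functional (g : M → M) (x : M) :
    ∃ (ns : ℕ → ℕ) (L : C(M,ℝ) → ℝ), StrictMono ns ∧
      (∀ φ : C(M,ℝ), Tendsto (fun j => eavg g x φ (ns j)) atTop (nhds (L φ))) ∧
      (∀ f h : C(M,ℝ), L (f + h) = L f + L h) ∧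
      (∀ (c : ℝ) (f : C(M,ℝ)), L (c • f) = c * L f) ∧
      (∀ f : C(M,ℝ), (∀ y, 0 ≤ f y) → 0 ≤ L f) ∧ L 1 = 1 := by
  haveI : Nonempty M := ⟨x⟩
  haveI : SeparableSpace C(M,ℝ) := by infer_instance
  set ψ : ℕ → C(M,ℝ) := denseSeq C(M,ℝ) with hψ
  have hdense : DenseRange ψ := denseRange_denseSeq _
  -- compact product set
  set S : Set (ℕ → ℝ) := univ.pi (fun m => Icc (-‖ψ m‖) ‖ψ m‖) with hS
  have hScomp : IsCompact S := isCompact_univ_pi (fun m => isCompact_Icc)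
  set F : ℕ → (ℕ → ℝ) := fun n m => eavg g x (ψ m) n with hF
  have hFS : ∀ n, F n ∈ S := by
    intro n m _
    have := abs_eavg_le g x (ψ m) n
    rw [abs_le] at this
    exact ⟨this.1, this.2⟩
  obtain ⟨a, -, ns, hns, hconv⟩ := hScomp.tendsto_subseq hFS
  have hcoord : ∀ m, Tendsto (fun j => eavg g x (ψ m) (ns j)) atTop (nhds (a m)) := by
    intro m
    have := tendsto_pi_nhds.1 hconv m
    exact this
  -- every φ gives a Cauchy sequence
  have hcauchy : ∀ φ : C(M,ℝ), ∃ l : ℝ, Tendsto (fun j => eavg g x φ (ns j)) atTop (nhds l) := by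
    intro φ
    apply cauchySeq_tendsto_of_complete
    rw [Metric.cauchySeq_iff']
    intro ε hε
    obtain ⟨m, hm⟩ := Metric.denseRange_iff.1 hdense φ (ε/4) (by linarith)
    have hc := hcoord m
    rw [Metric.tendsto_atTop] at hc
    obtain ⟨N, hN⟩ := hc (ε/4) (by linarith)
    refine ⟨N, fun n hn => ?_⟩
    set u : ℕ → ℝ := fun j => eavg g x φ (ns j) with hu
    set v : ℕ → ℝ := fun j => eavg g x (ψ m) (ns j) with hv
    have e1 : |u n - v n| ≤ dist φ (ψ m) := abs_eavg_sub_le g x φ (ψ m) (ns n)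
    have e2 : |u N - v N| ≤ dist φ (ψ m) := abs_eavg_sub_le g x φ (ψ m) (ns N)
    have e3 : |v n - a m| < ε/4 := by rw [← Real.dist_eq]; exact hN n hn
    have e4 : |v N - a m| < ε/4 := by rw [← Real.dist_eq]; exact hN N (le_refl N)
    have t1 : |u n - u N| ≤ |u n - v n| + |v n - v N| + |v N - u N| := by
      have p1 := abs_sub_le (u n) (v n) (u N)
      have p2 := abs_sub_le (v n) (v N) (u N)
      linarith
    have t2 : |v n - v N| ≤ |v n - a m| + |a m - v N| := abs_sub_le _ _ _
    have c1 : |a m - v N| = |v N - a m| := abs_sub_comm _ _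
    have c2 : |v N - u N| = |u N - v N| := abs_sub_comm _ _
    rw [Real.dist_eq]
    have hdφ : dist φ (ψ m) < ε/4 := hm
    linarith
  choose L hL using hcauchy
  refine ⟨ns, L, hns, hL, ?_, ?_, ?_, ?_⟩
  · intro f h
    have h1 : Tendsto (fun j => eavg g x (f + h) (ns j)) atTop (nhds (L f + L h)) := by
      have : (fun j => eavg g x (f + h) (ns j))
          = fun j => eavg g x f (ns j) + eavg g x h (ns j) := by
        funext j
        simp [eavg, Finset.sum_add_distrib, add_div]
      rw [this]
      exact (hL f).add (hL h)
    exact tendsto_nhds_unique (hL (f + h)) h1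
  · intro c f
    have h1 : Tendsto (fun j => eavg g x (c • f) (ns j)) atTop (nhds (c * L f)) := by
      have : (fun j => eavg g x (c • f) (ns j)) = fun j => c * eavg g x f (ns j) := by
        funext j
        simp only [eavg, ContinuousMap.smul_apply, smul_eq_mul]
        rw [← Finset.mul_sum, mul_div_assoc]
      rw [this]
      exact (hL f).const_mul c
    exact tendsto_nhds_unique (hL (c • f)) h1
  · intro f hf
    apply ge_of_tendsto (hL f)
    filter_upwards with j
    apply div_nonneg _ (Nat.cast_nonneg _)
    exact Finset.sum_nonneg (fun i _ => hf _)
  · have heq : (fun _ : ℕ => (1:ℝ)) =ᶠ[atTop] (fun j => eavg g x (1:C(M,ℝ)) (ns j)) := by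
      filter_upwards [eventually_ge_atTop 1] with j hj
      have hnsj : 1 ≤ ns j := le_trans hj hns.le_apply
      have hne : ((ns j : ℕ) : ℝ) ≠ 0 := Nat.cast_ne_zero.2 (by omega)
      simp [eavg, Finset.sum_const, div_self hne]
    have h1 : Tendsto (fun j => eavg g x (1:C(M,ℝ)) (ns j)) atTop (nhds 1) :=
      Tendsto.congr' heq tendsto_const_nhds
    exact tendsto_nhds_unique (hL 1) h1

end Diag

section Basin
variable {M : Type*} [TopologicalSpace M] [MeasurableSpace M]

theorem basin_of_apply_mem {g : M → M} {μ : Measure M} {x : M}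
    (h : g x ∈ basin g μ) : x ∈ basin g μ := by
  intro φ
  have hT := h φ
  set c := ∫ y, φ y ∂μ with hc
  set S : ℕ → ℝ := fun n => ∑ i ∈ Finset.range n, φ (g^[i] x) with hSdef
  set T : ℕ → ℝ := fun n => ∑ i ∈ Finset.range n, φ (g^[i] (g x)) with hTdef
  have hST : ∀ n, S (n+1) = T n + φ x := by
    intro n
    simp only [hSdef, hTdef, Finset.sum_range_succ' (fun i => φ (g^[i] x)) n,
      Function.iterate_succ_apply, Function.iterate_zero_apply]
  have lim1 : Tendsto (fun n : ℕ => T n / n * ((n:ℝ)/((n:ℝ)+1)) + φ x * (1/((n:ℝ)+1)))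
      atTop (nhds (c * 1 + φ x * 0)) := by
    apply Tendsto.add
    · exact Tendsto.mul hT (tendsto_natCast_div_add_atTop (1:ℝ))
    · exact Tendsto.const_mul _ tendsto_one_div_add_atTop_nhds_zero_nat
  rw [mul_one, mul_zero, add_zero] at lim1
  have heq : (fun n : ℕ => T n / n * ((n:ℝ)/((n:ℝ)+1)) + φ x * (1/((n:ℝ)+1)))
      =ᶠ[atTop] (fun n : ℕ => S (n+1) / ((n:ℝ)+1)) := by
    filter_upwards [eventually_ge_atTop 1] with n hn
    have hn0 : ((n:ℕ):ℝ) ≠ 0 := Nat.cast_ne_zero.2 (by omega)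
    rw [hST n]
    field_simp
  have lim2 : Tendsto (fun n : ℕ => S (n+1) / ((n:ℝ)+1)) atTop (nhds c) :=
    lim1.congr' heq
  have lim3 : Tendsto (fun n : ℕ => S n / (n:ℝ)) atTop (nhds c) := by
    apply (tendsto_add_atTop_iff_nat 1).mp
    refine lim2.congr (fun n => ?_)
    norm_cast
  exact lim3

theorem basin_of_iterate_mem {g : M → M} {μ : Measure M} (n : ℕ) :
    ∀ x : M, g^[n] x ∈ basin g μ → x ∈ basin g μ := by
  induction n with
  | zero => intro x h; simpa using h
  | succ m ih =>
    intro x h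
    rw [Function.iterate_succ_apply] at h
    exact basin_of_apply_mem (ih (g x) h)

end Basin

section NullPreimage
variable {M : Type*} [MetricSpace M] [CompactSpace M] [MeasurableSpace M] [BorelSpace M]

theorem iterate_preimage_null {g : M → M} (hg : Continuous g) {vol : Measure M}
    (hqc : ∀ s : Set M, MeasurableSet s → (vol s = 0 ↔ vol (g ⁻¹' s) = 0))
    (n : ℕ) {s : Set M} (hs : MeasurableSet s) (h0 : vol s = 0) :
    vol ((g^[n]) ⁻¹' s) = 0 := by
  induction n generalizing s with
  | zero => simpa using h0
  | succ m ih =>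
    rw [Function.iterate_succ']
    rw [Set.preimage_comp]
    exact ih (hg.measurable hs) ((hqc s hs).1 h0)

end NullPreimage

/-- Let `g` have finitely many physical measures `μ 0, …, μ (k-1)` such that
`G(g)` is the simplex generated by them (`hG`), each `μ i` assigns positive measure to some
ball contained (mod `vol`-null sets) in the basin of `μ i` (`hball`), and for
`vol`-a.e. `x` every weak-* limit of the empirical measures of `x` lies in `G(g)`
(`hlimit`, limits along subsequences). Then the union of the basins of the `μ i` has full
volume in `M`. (`hqc` records that `g` is nonsingular with respect to the volume.) -/
theorem union_of_basins_full_volume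
    {M : Type*} [MetricSpace M] [CompactSpace M] [MeasurableSpace M] [BorelSpace M]
    (g : M → M) (hg : Continuous g)
    (vol : Measure M) [IsFiniteMeasure vol]
    (hqc : ∀ s : Set M, MeasurableSet s → (vol s = 0 ↔ vol (g ⁻¹' s) = 0))
    (k : ℕ) (hk : 1 ≤ k) (μ : Fin k → Measure M)
    (hμ : ∀ i, IsProbabilityMeasure (μ i) ∧ Measure.map g (μ i) = μ i)
    (G : Set (Measure M))
    (hG : G = {ν | ∃ a : Fin k → ℝ, (∀ i, 0 ≤ a i) ∧ (∑ i, a i) = 1 ∧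
      ν = ∑ i, ENNReal.ofReal (a i) • μ i})
    (hball : ∀ i, ∃ (c : M) (r : ℝ), 0 < r ∧ 0 < μ i (Metric.ball c r) ∧
      vol (Metric.ball c r \ basin g (μ i)) = 0)
    (hlimit : ∀ᵐ x ∂vol, ∀ ν : Measure M, IsProbabilityMeasure ν →
      (∃ ns : ℕ → ℕ, StrictMono ns ∧ ∀ φ : C(M, ℝ),
        Tendsto (fun j : ℕ => (∑ i ∈ Finset.range (ns j), φ (g^[i] x)) / (ns j))
          atTop (nhds (∫ y, φ y ∂ν))) → ν ∈ G) :
    vol (⋃ i, basin g (μ i))ᶜ = 0 := by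
  classical
  choose c r hr hμball hnull using hball
  set N : Fin k → Set M := fun i => Metric.ball (c i) (r i) \ basin g (μ i) with hN
  set Ntm : Fin k → Set M := fun i => toMeasurable vol (N i) with hNtm
  have hNtm_meas : ∀ i, MeasurableSet (Ntm i) := fun i => measurableSet_toMeasurable _ _
  have hNtm_null : ∀ i, vol (Ntm i) = 0 := fun i => by
    rw [hNtm]; rw [measure_toMeasurable]; exact hnull i
  set Z : Set M := ⋃ (i : Fin k) (n : ℕ), (g^[n]) ⁻¹' (Ntm i) with hZ
  have hZnull : vol Z = 0 := by
    apply measure_iUnion_null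
    intro i
    apply measure_iUnion_null
    intro n
    exact iterate_preimage_null hg hqc n (hNtm_meas i) (hNtm_null i)
  have hZae : ∀ᵐ x ∂vol, x ∉ Z := by
    rw [MeasureTheory.ae_iff]
    simpa using hZnull
  have main : ∀ᵐ x ∂vol, x ∈ ⋃ i, basin g (μ i) := by
    filter_upwards [hlimit, hZae] with x hx1 hx2
    obtain ⟨ns, L, hns, hL, hadd, hsmul, hpos, hone⟩ := exists_limit_functional g x
    obtain ⟨ν, hνprob, hνrepr⟩ := rmk_exists_measure L hadd hsmul hpos hone
    have hνG : ν ∈ G := by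
      apply hx1 ν hνprob
      refine ⟨ns, hns, fun φ => ?_⟩
      rw [hνrepr φ]
      exact hL φ
    rw [hG] at hνG
    obtain ⟨a, ha0, hasum, haν⟩ := hνG
    have hat : ∃ t, 0 < a t := by
      by_contra hcon
      push_neg at hcon
      have hz : ∀ t, a t = 0 := fun t => le_antisymm (hcon t) (ha0 t)
      rw [Finset.sum_congr rfl (fun t _ => hz t)] at hasum
      simp at hasum
    obtain ⟨t, hat⟩ := hat
    have hνball : 0 < ν (Metric.ball (c t) (r t)) := by
      have h1 : ν (Metric.ball (c t) (r t))
          = ∑ i, ENNReal.ofReal (a i) * μ i (Metric.ball (c t) (r t)) := by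
        rw [haν, MeasureTheory.Measure.coe_finset_sum]
        simp [Finset.sum_apply]
      have h2 : ENNReal.ofReal (a t) * μ t (Metric.ball (c t) (r t))
          ≤ ∑ i, ENNReal.ofReal (a i) * μ i (Metric.ball (c t) (r t)) :=
        Finset.single_le_sum (f := fun i => ENNReal.ofReal (a i) * μ i (Metric.ball (c t) (r t))) (fun i _ => zero_le) (Finset.mem_univ t)
      rw [h1]
      refine lt_of_lt_of_le ?_ h2
      apply ENNReal.mul_pos
      · simpa using (ENNReal.ofReal_pos.2 hat).ne'
      · exact (hμball t).ne'
    have hballU : Metric.ball (c t) (r t)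
        = ⋃ n : ℕ, Metric.closedBall (c t) (r t - r t / (n+1)) := by
      ext y
      simp only [Metric.mem_ball, Set.mem_iUnion, Metric.mem_closedBall]
      constructor
      · intro hy
        obtain ⟨n, hn⟩ := exists_nat_one_div_lt
          (ε := (r t - dist y (c t))/(r t)) (div_pos (by linarith) (hr t))
        refine ⟨n, ?_⟩
        have h3 : r t / ((n:ℝ)+1) = r t * (1/((n:ℝ)+1)) := by ring
        have h4 : r t * (1/((n:ℝ)+1)) < r t * ((r t - dist y (c t))/(r t)) :=
          mul_lt_mul_of_pos_left hn (hr t)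
        have h5 : r t * ((r t - dist y (c t))/(r t)) = r t - dist y (c t) := by
          rw [mul_div_assoc']
          exact mul_div_cancel_left₀ _ (hr t).ne'
        rw [h5] at h4
        rw [h3]
        linarith
      · rintro ⟨n, hn⟩
        have hpos' : (0:ℝ) < r t / ((n:ℝ)+1) := div_pos (hr t) (by positivity)
        linarith
    have hmono : Monotone (fun n : ℕ => Metric.closedBall (c t) (r t - r t / ((n:ℝ)+1))) := by
      intro n m hnm
      apply Metric.closedBall_subset_closedBall
      have h1 : ((n:ℝ)+1) ≤ ((m:ℝ)+1) := by
        have : (n:ℝ) ≤ (m:ℝ) := by exact_mod_cast hnm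
        linarith
      have h2 : r t / ((m:ℝ)+1) ≤ r t / ((n:ℝ)+1) :=
        div_le_div_of_nonneg_left (hr t).le (show (0:ℝ) < (n:ℝ)+1 by positivity) h1
      linarith
    have hcb : ∃ n : ℕ, 0 < ν (Metric.closedBall (c t) (r t - r t/((n:ℝ)+1))) := by
      have h1 : ν (Metric.ball (c t) (r t))
          = ⨆ n : ℕ, ν (Metric.closedBall (c t) (r t - r t/((n:ℝ)+1))) := by
        rw [hballU]
        exact hmono.directed_le.measure_iUnion
      rw [h1] at hνball
      exact lt_iSup_iff.1 hνball
    obtain ⟨n₀, hcb⟩ := hcb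
    set r' : ℝ := r t - r t/((n₀:ℝ)+1) with hr'
    have hrr' : 0 < r t - r' := by
      have : (0:ℝ) < r t/((n₀:ℝ)+1) := div_pos (hr t) (by positivity)
      simp only [hr']
      linarith
    have hr'lt : r' < r t := by linarith
    set φb : C(M,ℝ) := ⟨fun y => max 0 (min 1 ((r t - dist y (c t))/(r t - r'))), by
      apply Continuous.max continuous_const
      apply Continuous.min continuous_const
      exact (continuous_const.sub (continuous_id.dist continuous_const)).div_const _⟩ with hφb
    have hφb0 : ∀ y, 0 ≤ φb y := fun y => le_max_left _ _
    have hφbcb : ∀ y ∈ Metric.closedBall (c t) r', φb y = 1 := by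
      intro y hy
      rw [Metric.mem_closedBall] at hy
      have h1 : (1:ℝ) ≤ (r t - dist y (c t))/(r t - r') := by
        rw [le_div_iff₀ hrr']
        linarith
      simp only [hφb, ContinuousMap.coe_mk]
      rw [min_eq_left h1]
      simp
    have hφbout : ∀ y, 0 < φb y → y ∈ Metric.ball (c t) (r t) := by
      intro y hy
      by_contra hout
      rw [Metric.mem_ball, not_lt] at hout
      have h1 : (r t - dist y (c t))/(r t - r') ≤ 0 :=
        div_nonpos_of_nonpos_of_nonneg (by linarith) hrr'.le
      have h2 : min 1 ((r t - dist y (c t))/(r t - r')) ≤ 0 :=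
        le_trans (min_le_right _ _) h1
      have h3 : φb y = 0 := by
        simp only [hφb, ContinuousMap.coe_mk]
        exact max_eq_left h2
      rw [h3] at hy
      exact lt_irrefl 0 hy
    haveI := hνprob
    have hInt : Integrable (fun y => φb y) ν :=
      φb.continuous.integrable_of_hasCompactSupport ((isClosed_tsupport _).isCompact)
    have hIνpos : 0 < ∫ y, φb y ∂ν := by
      have h1 : (1:ℝ) * (ν (Metric.closedBall (c t) r')).toReal
          ≤ ∫ y in Metric.closedBall (c t) r', φb y ∂ν :=
        setIntegral_ge_of_const_le_real measurableSet_closedBall (measure_ne_top ν _)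
          (fun y hy => le_of_eq (hφbcb y hy).symm) hInt.integrableOn
      have h2 : ∫ y in Metric.closedBall (c t) r', φb y ∂ν ≤ ∫ y, φb y ∂ν :=
        setIntegral_le_integral hInt (Filter.Eventually.of_forall hφb0)
      have h3 : 0 < (ν (Metric.closedBall (c t) r')).toReal :=
        ENNReal.toReal_pos hcb.ne' (measure_ne_top ν _)
      linarith
    have horbit : ∃ m : ℕ, g^[m] x ∈ Metric.ball (c t) (r t) := by
      have h1 : Tendsto (fun j => eavg g x φb (ns j)) atTop (nhds (∫ y, φb y ∂ν)) := by
        rw [hνrepr φb]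
        exact hL φb
      have h2 := Tendsto.eventually_const_lt hIνpos h1
      obtain ⟨j, hj⟩ := h2.exists
      by_contra hcon
      push_neg at hcon
      have hterm : ∀ i : ℕ, φb (g^[i] x) ≤ 0 := by
        intro i
        by_contra h
        push_neg at h
        exact hcon i (hφbout _ h)
      have hnp : eavg g x φb (ns j) ≤ 0 := by
        apply div_nonpos_of_nonpos_of_nonneg
        · exact Finset.sum_nonpos (fun i _ => hterm i)
        · exact Nat.cast_nonneg _
      linarith
    obtain ⟨m, hm⟩ := horbit
    rcases Classical.em (g^[m] x ∈ basin g (μ t)) with hbas | hbas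
    · exact Set.mem_iUnion.2 ⟨t, basin_of_iterate_mem m x hbas⟩
    · exfalso
      apply hx2
      rw [hZ]
      refine Set.mem_iUnion.2 ⟨t, Set.mem_iUnion.2 ⟨m, ?_⟩⟩
      have hmem : g^[m] x ∈ N t := ⟨hm, hbas⟩
      exact subset_toMeasurable vol (N t) hmem
  rw [MeasureTheory.ae_iff] at main
  exact main
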